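/- Suppose A is a square matrix, s, m are naturals, and e^{-2^{-s}A}·T_m(2^{-s}A) = I + G where T_m is the order-m Taylor polynomial of exp and ‖G‖ < 1 in a submultiplicative norm. Then there exists a matrix E commuting with A such that (T_m(2^{-s}A))^{2^s} = e^{A+E} and ‖E‖/‖A‖ ≤ -log(1 - ‖G‖)/‖2^{-s}A‖ (assuming A ≠ 0). -/

import Mathlib

open Finset

open NormedSpace


private lemma key_exp_log {B : Type*} [NormedCommRing B] [NormedAlgebra ℝ B] [CompleteSpace B]
    (g : B) (hg : ‖g‖ < 1) :
    exp (∑' n : ℕ, (((-1 : ℝ) ^ n / (n + 1)) • g ^ (n + 1))) = 1 + g := by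
  rcases eq_or_ne g 0 with rfl | hg0
  · simp [zero_pow, exp_zero]
  · set q : ℝ := ‖g‖ with hq
    have hq0 : 0 < q := norm_pos_iff.mpr hg0
    set r : ℝ := (1 + q⁻¹) / 2 with hr
    have hr1 : 1 < r := by
      have : 1 < q⁻¹ := (one_lt_inv₀ hq0).mpr hg
      rw [hr]; linarith
    have hrq : r * q < 1 := by
      have hqne : q ≠ 0 := ne_of_gt hq0
      have : r * q = (q + 1) / 2 := by
        rw [hr]; field_simp
      rw [this]; linarith
    have hrq0 : (0 : ℝ) ≤ r * q := by positivity
    set t : Set ℝ := Set.Ioo (-r) r with ht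
    set f : ℕ → ℝ → B := fun n x => (((-1 : ℝ) ^ n / (n + 1)) * x ^ (n + 1)) • g ^ (n + 1) with hf
    set f' : ℕ → ℝ → B := fun n x => (((-1 : ℝ) ^ n) * x ^ n) • g ^ (n + 1) with hf'
    set u : ℕ → ℝ := fun n => (r * q) ^ n * q with hu
    have hsumu : Summable u := (summable_geometric_of_lt_one hrq0 hrq).mul_right q
    have hderiv : ∀ n x, x ∈ t → HasDerivAt (f n) (f' n x) x := by
      intro n x _
      have h1 : HasDerivAt (fun x : ℝ => ((-1 : ℝ) ^ n / (n + 1)) * x ^ (n + 1))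
          (((-1 : ℝ) ^ n / (n + 1)) * (((n : ℝ) + 1) * x ^ n)) x := by
        have := (hasDerivAt_pow (n + 1) x).const_mul ((-1 : ℝ) ^ n / ((n : ℝ) + 1))
        simpa [Nat.add_sub_cancel] using this
      have h2 := h1.smul_const (g ^ (n + 1))
      convert h2 using 2
      · rfl
      have hne : ((n : ℝ) + 1) ≠ 0 := by positivity
      field_simp
    have hbound : ∀ n x, x ∈ t → ‖f' n x‖ ≤ u n := by
      intro n x hx
      have hxr : |x| ≤ r := le_of_lt (abs_lt.mpr ⟨hx.1, hx.2⟩)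
      have h1 : ‖f' n x‖ ≤ |x| ^ n * q ^ (n + 1) := by
        rw [hf', norm_smul]
        have habs : |(-1 : ℝ) ^ n * x ^ n| = |x| ^ n := by
          rw [abs_mul, abs_pow, abs_pow, abs_neg, abs_one, one_pow, one_mul]
        rw [Real.norm_eq_abs, habs]
        exact mul_le_mul_of_nonneg_left (norm_pow_le' g n.succ_pos) (by positivity)
      refine h1.trans ?_
      have h2 : |x| ^ n * q ^ (n + 1) ≤ r ^ n * q ^ (n + 1) := by
        gcongr
      refine h2.trans (le_of_eq ?_)
      show r ^ n * q ^ (n + 1) = (r * q) ^ n * q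
      rw [mul_pow, pow_succ]
      ring
    have h0t : (0 : ℝ) ∈ t := ⟨by linarith, by linarith⟩
    have h1t : (1 : ℝ) ∈ t := ⟨by linarith, hr1⟩
    have hsum0 : Summable fun n => f n 0 := by
      have : (fun n => f n 0) = fun _ => (0 : B) := by
        funext n; simp [hf]
      rw [this]; exact summable_zero
    set L : ℝ → B := fun x => ∑' n, f n x with hL
    set P : ℝ → B := fun x => ∑' n, f' n x with hP
    have hLderiv : ∀ x ∈ t, HasDerivAt L (P x) x := fun x hx =>
      hasDerivAt_tsum_of_isPreconnected hsumu isOpen_Ioo (convex_Ioo _ _).isPreconnected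
        hderiv hbound h0t hsum0 hx
    have hsumf' : ∀ x ∈ t, Summable fun n => f' n x := fun x hx =>
      Summable.of_norm_bounded hsumu (fun n => hbound n x hx)
    have kid : ∀ x ∈ t, P x * (1 + x • g) = g := by
      intro x hx
      have hS : HasSum (fun n => f' n x) (P x) := (hsumf' x hx).hasSum
      have h2 : HasSum (fun n => x • (f' n x * g)) (x • (P x * g)) :=
        (hS.mul_right g).const_smul x
      have h3 : (fun n => x • (f' n x * g)) = fun n => -f' (n + 1) x := by
        funext n
        rw [hf']
        simp only [smul_mul_assoc, smul_smul, ← neg_smul, ← pow_succ]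
        congr 1
        ring
      rw [h3] at h2
      have h4 : HasSum (fun n => f' (n + 1) x) (P x - f' 0 x) := by
        apply (hasSum_nat_add_iff (f := fun n => f' n x) 1).mpr
        simpa using hS
      have h6 : x • (P x * g) = -(P x - f' 0 x) := h2.unique h4.neg
      have hf0 : f' 0 x = g := by simp [hf']
      rw [hf0] at h6
      calc P x * (1 + x • g) = P x + x • (P x * g) := by
            rw [mul_add, mul_one, mul_smul_comm]
        _ = P x + -(P x - g) := by rw [h6]
        _ = g := by ring
    set h : ℝ → B := fun x => exp (-(L x)) * (1 + x • g) with hh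
    have hhderiv : ∀ x ∈ t, HasDerivAt h 0 x := by
      intro x hx
      have hneg : HasDerivAt (fun y => -(L y)) (-(P x)) x := (hLderiv x hx).neg
      have hexp : HasDerivAt (fun y => exp (-(L y))) (exp (-(L x)) * (-(P x))) x := by
        have := (hasFDerivAt_exp (𝕂 := ℝ) (x := -(L x))).comp_hasDerivAt x hneg
        simpa [Function.comp_def] using this
      have hw : HasDerivAt (fun y : ℝ => 1 + y • g) g x := by
        simpa using ((hasDerivAt_id x).smul_const g).const_add (1 : B)
      have hm := hexp.mul hw
      convert hm using 1
      · rfl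
      calc (0 : B) = exp (-(L x)) * (-(P x * (1 + x • g))) + exp (-(L x)) * g := by
            rw [kid x hx]; ring
        _ = exp (-(L x)) * (-(P x)) * (1 + x • g) + exp (-(L x)) * g := by ring
    have hconst : h 0 = h 1 := by
      have hmvt := (convex_Ioo (-r) r).norm_image_sub_le_of_norm_hasDerivWithin_le
        (f := h) (f' := fun _ => 0) (C := 0)
        (fun x hx => (hhderiv x hx).hasDerivWithinAt) (fun x _ => by simp) h1t h0t
      have h2 : ‖h 0 - h 1‖ ≤ 0 := by simpa using hmvt
      exact sub_eq_zero.mp (norm_le_zero_iff.mp h2)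
    have hL0 : L 0 = 0 := by
      rw [hL]
      have : (fun n => f n 0) = fun _ => (0 : B) := by funext n; simp [hf]
      simp only [this, tsum_zero]
    have hh0 : h 0 = 1 := by
      rw [hh]; simp [hL0, exp_zero]
    have hh1 : exp (-(L 1)) * (1 + g) = 1 := by
      have := hconst.symm.trans hh0
      rw [hh] at this
      simpa using this
    have hexpinv : exp (L 1) * exp (-(L 1)) = 1 := by
      letI : NormedAlgebra ℚ B := .restrictScalars ℚ ℝ B
      rw [← exp_add]
      simp [exp_zero]
    have hfinal : exp (L 1) = 1 + g := by
      calc exp (L 1) = exp (L 1) * (exp (-(L 1)) * (1 + g)) := by rw [hh1, mul_one]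
        _ = exp (L 1) * exp (-(L 1)) * (1 + g) := by rw [mul_assoc]
        _ = 1 + g := by rw [hexpinv, one_mul]
    have hL1 : L 1 = ∑' n : ℕ, (((-1 : ℝ) ^ n / (n + 1)) • g ^ (n + 1)) := by
      rw [hL]
      exact tsum_congr fun n => by simp [hf]
    rw [← hL1]
    exact hfinal

set_option synthInstance.maxHeartbeats 1000000 in
set_option maxHeartbeats 1000000 in
private lemma exp_log_general {𝔸 : Type*} [NormedRing 𝔸] [NormedAlgebra ℝ 𝔸] [CompleteSpace 𝔸]
    (g : 𝔸) (hg : ‖g‖ < 1) :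
    exp (∑' n : ℕ, (((-1 : ℝ) ^ n / (n + 1)) • g ^ (n + 1))) = 1 + g := by
  set S : Subalgebra ℝ 𝔸 := (Algebra.adjoin ℝ ({g} : Set 𝔸)).topologicalClosure with hS
  haveI hNS : NormedSpace ℝ ↥S := inferInstance
  have hcommadj : ∀ x y : (Algebra.adjoin ℝ ({g} : Set 𝔸)), x * y = y * x := by
    letI := Algebra.adjoinCommRingOfComm ℝ (s := ({g} : Set 𝔸)) (by
      rintro a ha b hb
      rw [Set.mem_singleton_iff] at ha hb
      subst ha; subst hb; rfl)
    exact fun x y => mul_comm x y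
  letI : CommRing ↥S :=
    Subalgebra.commRingTopologicalClosure (Algebra.adjoin ℝ ({g} : Set 𝔸)) hcommadj
  letI : NormedCommRing ↥S := { (inferInstance : NormedRing ↥S) with mul_comm := mul_comm }
  haveI : CompleteSpace ↥S := by
    have hcl : IsClosed (S : Set 𝔸) :=
      (Algebra.adjoin ℝ ({g} : Set 𝔸)).isClosed_topologicalClosure
    exact hcl.completeSpace_coe
  have hmem : g ∈ S :=
    (Algebra.adjoin ℝ ({g} : Set 𝔸)).le_topologicalClosure (Algebra.self_mem_adjoin_singleton ℝ g)
  set gS : ↥S := ⟨g, hmem⟩ with hgS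
  have hgSnorm : ‖gS‖ = ‖g‖ := rfl
  have hkey := key_exp_log gS (by rw [hgSnorm]; exact hg)
  have hsumgeo : Summable (fun n : ℕ => ‖g‖ ^ n * ‖g‖) :=
    (summable_geometric_of_lt_one (norm_nonneg g) hg).mul_right ‖g‖
  have hsumS : Summable (fun n : ℕ => (((-1 : ℝ) ^ n / (n + 1)) • gS ^ (n + 1))) := by
    apply Summable.of_norm_bounded hsumgeo
    intro n
    have hco : ‖(((-1 : ℝ) ^ n / (n + 1)) • gS ^ (n + 1) : ↥S)‖
        = ‖(((-1 : ℝ) ^ n / (n + 1)) • g ^ (n + 1) : 𝔸)‖ := rfl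
    rw [hco, norm_smul]
    have h1 : ‖(-1 : ℝ) ^ n / ((n : ℝ) + 1)‖ ≤ 1 := by
      rw [Real.norm_eq_abs, abs_div, abs_pow, abs_neg, abs_one, one_pow]
      rw [abs_of_pos (by positivity : (0:ℝ) < (n : ℝ) + 1)]
      rw [div_le_one (by positivity)]
      linarith [Nat.cast_nonneg (α := ℝ) n]
    have h2 : ‖g ^ (n + 1)‖ ≤ ‖g‖ ^ n * ‖g‖ := by
      calc ‖g ^ (n+1)‖ ≤ ‖g‖ ^ (n+1) := norm_pow_le' g n.succ_pos
        _ = ‖g‖ ^ n * ‖g‖ := pow_succ _ _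
    calc ‖(-1 : ℝ) ^ n / ((n : ℝ) + 1)‖ * ‖g ^ (n + 1)‖ ≤ 1 * (‖g‖ ^ n * ‖g‖) := by
          apply mul_le_mul h1 h2 (norm_nonneg _) zero_le_one
      _ = ‖g‖ ^ n * ‖g‖ := one_mul _
  have hcont : Continuous (S.val : ↥S → 𝔸) := continuous_subtype_val
  have hmap := hsumS.hasSum.map (S.val : ↥S →ₐ[ℝ] 𝔸) hcont
  simp only [Function.comp_def] at hmap
  have heq : (fun n : ℕ => (S.val : ↥S →ₐ[ℝ] 𝔸) (((-1 : ℝ) ^ n / (n + 1)) • gS ^ (n + 1)))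
      = fun n : ℕ => (((-1 : ℝ) ^ n / (n + 1)) • g ^ (n + 1)) := by
    funext n
    rw [map_smul, map_pow]
    rfl
  rw [heq] at hmap
  have htsum : (∑' n : ℕ, (((-1 : ℝ) ^ n / (n + 1)) • g ^ (n + 1)))
      = (S.val : ↥S →ₐ[ℝ] 𝔸) (∑' n : ℕ, (((-1 : ℝ) ^ n / (n + 1)) • gS ^ (n + 1))) :=
    hmap.tsum_eq
  letI : NormedAlgebra ℚ 𝔸 := .restrictScalars ℚ ℝ 𝔸
  letI : NormedAlgebra ℚ ↥S := .restrictScalars ℚ ℝ ↥S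
  rw [htsum, ← map_exp (S.val : ↥S →ₐ[ℝ] 𝔸) hcont, hkey]
  simp only [map_add, map_one]
  rfl

/-- Backward error theorem of Sastre et al. (2015): if
`e^{-2^{-s}A} T_m(2^{-s}A) = I + G` with `‖G‖ < 1`, then
`(T_m(2^{-s}A))^{2^s} = e^{A+E}` for some `E` commuting with `A`, with
`‖E‖/‖A‖ ≤ -log(1-‖G‖)/‖2^{-s}A‖`. -/
theorem stmt_11 (𝔸 : Type*) [NormedRing 𝔸] [NormedAlgebra ℂ 𝔸] [CompleteSpace 𝔸]
    (A : 𝔸) (hA : A ≠ 0) (s m : ℕ)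
    (G : 𝔸)
    (hG : NormedSpace.exp (-(((2 : ℂ) ^ s)⁻¹ • A)) *
        (∑ i ∈ range (m + 1), ((i.factorial : ℂ)⁻¹) • (((2 : ℂ) ^ s)⁻¹ • A) ^ i) = 1 + G)
    (hGnorm : ‖G‖ < 1) :
    ∃ E : 𝔸, Commute A E ∧
      (∑ i ∈ range (m + 1), ((i.factorial : ℂ)⁻¹) • (((2 : ℂ) ^ s)⁻¹ • A) ^ i) ^ (2 ^ s) =
        NormedSpace.exp (A + E) ∧
      ‖E‖ / ‖A‖ ≤ -Real.log (1 - ‖G‖) / ‖((2 : ℂ) ^ s)⁻¹ • A‖ := by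
  letI : NormedAlgebra ℚ 𝔸 := .restrictScalars ℚ ℂ 𝔸
  set c : ℂ := ((2 : ℂ) ^ s)⁻¹ with hc
  set B : 𝔸 := c • A with hB
  set T : 𝔸 := ∑ i ∈ range (m + 1), ((i.factorial : ℂ)⁻¹) • B ^ i with hT
  have hc2 : ((2 : ℂ) ^ s) ≠ 0 := pow_ne_zero _ two_ne_zero
  -- commutation facts
  have hAB : Commute A B := (Commute.refl A).smul_right c
  have hAT : Commute A T :=
    Commute.sum_right _ _ _ fun i _ => (hAB.pow_right i).smul_right _
  have hAexp : Commute A (exp (-B)) := (hAB.neg_right).exp_right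
  have hAG : Commute A G := by
    have h1 : Commute A (exp (-B) * T) := hAexp.mul_right hAT
    rw [hG] at h1
    have h2 := h1.sub_right (Commute.one_right A)
    simpa using h2
  -- the log series
  set E₀ : 𝔸 := ∑' n : ℕ, (((-1 : ℝ) ^ n / (n + 1)) • G ^ (n + 1)) with hE₀
  have hexp₀ : exp E₀ = 1 + G := exp_log_general G hGnorm
  -- norm bound on the series
  have hGabs : |‖G‖| < 1 := by rwa [abs_of_nonneg (norm_nonneg G)]
  have hlog : HasSum (fun n : ℕ => ‖G‖ ^ (n + 1) / (n + 1)) (-Real.log (1 - ‖G‖)) :=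
    Real.hasSum_pow_div_log_of_abs_lt_one hGabs
  have termbound : ∀ n : ℕ,
      ‖(((-1 : ℝ) ^ n / (n + 1)) • G ^ (n + 1))‖ ≤ ‖G‖ ^ (n + 1) / (n + 1) := by
    intro n
    rw [norm_smul, Real.norm_eq_abs, abs_div, abs_pow, abs_neg, abs_one, one_pow,
      abs_of_pos (by positivity : (0:ℝ) < (n : ℝ) + 1)]
    rw [div_mul_eq_mul_div, one_mul, div_le_div_iff₀ (by positivity) (by positivity)]
    have h := norm_pow_le' G n.succ_pos
    simp only [Nat.succ_eq_add_one] at h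
    exact mul_le_mul_of_nonneg_right h (by positivity)
  have hsumnorm : Summable fun n : ℕ => ‖(((-1 : ℝ) ^ n / (n + 1)) • G ^ (n + 1))‖ :=
    Summable.of_nonneg_of_le (fun n => norm_nonneg _) termbound hlog.summable
  have hsumf : Summable fun n : ℕ => (((-1 : ℝ) ^ n / (n + 1)) • G ^ (n + 1)) :=
    hsumnorm.of_norm
  have hE₀norm : ‖E₀‖ ≤ -Real.log (1 - ‖G‖) := by
    calc ‖E₀‖ ≤ ∑' n : ℕ, ‖(((-1 : ℝ) ^ n / (n + 1)) • G ^ (n + 1))‖ :=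
          norm_tsum_le_tsum_norm hsumnorm
      _ ≤ ∑' n : ℕ, ‖G‖ ^ (n + 1) / (n + 1) :=
          Summable.tsum_le_tsum termbound hsumnorm hlog.summable
      _ = -Real.log (1 - ‖G‖) := hlog.tsum_eq
  -- A commutes with E₀
  have hAE₀ : Commute A E₀ := by
    show A * E₀ = E₀ * A
    rw [hE₀, ← hsumf.tsum_mul_left A, ← hsumf.tsum_mul_right A]
    exact tsum_congr fun n => ((hAG.pow_right (n + 1)).smul_right _)
  refine ⟨(2 ^ s : ℕ) • E₀, hAE₀.smul_right _, ?_, ?_⟩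
  · -- main identity
    have hBnB : Commute B (-B) := (Commute.refl B).neg_right
    have hBexp : exp B * exp (-B) = 1 := by
      rw [← exp_add_of_commute hBnB]
      simp [exp_zero]
    have hTeq : T = exp B * (1 + G) := by
      rw [← hG, ← mul_assoc, hBexp, one_mul]
    have hBT : Commute B T :=
      Commute.sum_right _ _ _ fun i _ => ((Commute.refl B).pow_right i).smul_right _
    have hcomm2 : Commute (exp B) (1 + G) := by
      rw [← hG]
      exact (hBnB.exp).mul_right (hBT.exp_left)
    have hTpow : T ^ (2 ^ s) = exp B ^ (2 ^ s) * (1 + G) ^ (2 ^ s) := by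
      rw [hTeq, hcomm2.mul_pow]
    have hnsmulB : (2 ^ s : ℕ) • B = A := by
      rw [← Nat.cast_smul_eq_nsmul ℂ, hB, smul_smul, hc]
      push_cast
      rw [mul_inv_cancel₀ hc2, one_smul]
    have hexpBpow : exp B ^ (2 ^ s) = exp A := by
      rw [← exp_nsmul, hnsmulB]
    have hexpE₀ : exp E₀ = 1 + G := by
      exact hexp₀
    have hexpE : exp ((2 ^ s : ℕ) • E₀) = (1 + G) ^ (2 ^ s) := by
      rw [exp_nsmul, hexpE₀]
    rw [hTpow, hexpBpow, ← hexpE]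
    exact (exp_add_of_commute (hAE₀.smul_right (2 ^ s : ℕ))).symm
  · -- norm bound
    have hApos : 0 < ‖A‖ := norm_pos_iff.mpr hA
    have hXnn : 0 ≤ -Real.log (1 - ‖G‖) := by
      rw [neg_nonneg]
      apply Real.log_nonpos
      · linarith
      · linarith [norm_nonneg G]
    have hnormc : ‖c‖ = ((2 : ℝ) ^ s)⁻¹ := by
      rw [hc, norm_inv, norm_pow]
      norm_num
    have hEnorm : ‖(2 ^ s : ℕ) • E₀‖ = (2 : ℝ) ^ s * ‖E₀‖ := by
      rw [← Nat.cast_smul_eq_nsmul ℝ, norm_smul, Real.norm_eq_abs]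
      push_cast
      rw [abs_of_nonneg (by positivity : (0:ℝ) ≤ (2:ℝ) ^ s)]
    have hnormB : ‖B‖ = ((2 : ℝ) ^ s)⁻¹ * ‖A‖ := by
      rw [hB, norm_smul, hnormc]
    rw [show ‖((2 : ℂ) ^ s)⁻¹ • A‖ = ‖B‖ from rfl, hnormB]
    have h2s : (0:ℝ) < (2:ℝ) ^ s := by positivity
    rw [div_le_div_iff₀ hApos (by positivity)]
    rw [hEnorm]
    calc (2:ℝ) ^ s * ‖E₀‖ * (((2:ℝ) ^ s)⁻¹ * ‖A‖)
        = ‖E₀‖ * ‖A‖ := by field_simp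
      _ ≤ -Real.log (1 - ‖G‖) * ‖A‖ := by
          apply mul_le_mul_of_nonneg_right hE₀norm (norm_nonneg A)
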